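/- In the Euclidean plane ℝ², let C₁ = {(s,t) : s = 0} and C₂ = {(s,t) : s − 2 ≤ t ≤ s + 2}, both closed, convex and symmetric about the origin, with intersection C = {0} × [−2,2]. Starting from x₀ = (−4,4), the remotest projection algorithm (always projecting onto a set at maximal distance) gives x₁ = P_{C₂}x₀ = (−1,1) and x₂ = P_{C₁}x₁ = (0,1) ∈ C, while the projection of x₀ onto C equals (0,2). Hence the limit of remotest projections need not equal P_C x₀. -/

import Mathlib

noncomputable section

/-- The plane ℝ² with the Euclidean norm. -/
abbrev Plane : Type := EuclideanSpace ℝ (Fin 2)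

/-- A point of the Euclidean plane with given coordinates. -/
def pt (s t : ℝ) : Plane := (WithLp.equiv 2 (Fin 2 → ℝ)).symm ![s, t]

def C₁ : Set Plane := {p | p 0 = 0}

def C₂ : Set Plane := {p | p 0 - 2 ≤ p 1 ∧ p 1 ≤ p 0 + 2}

@[simp] lemma pt_apply_zero (s t : ℝ) : pt s t 0 = s := rfl
@[simp] lemma pt_apply_one (s t : ℝ) : pt s t 1 = t := rfl

lemma dist_pt (a b c d : ℝ) :
    dist (pt a b) (pt c d) = Real.sqrt ((a - c) ^ 2 + (b - d) ^ 2) := by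
  rw [EuclideanSpace.dist_eq, Fin.sum_univ_two]
  simp [Real.dist_eq, sq_abs]

lemma dist_pt_left (a b : ℝ) (y : Plane) :
    dist (pt a b) y = Real.sqrt ((a - y 0) ^ 2 + (b - y 1) ^ 2) := by
  rw [EuclideanSpace.dist_eq, Fin.sum_univ_two]
  simp [Real.dist_eq, sq_abs]

lemma le_infDist' {x : Plane} {s : Set Plane} (hs : s.Nonempty) {b : ℝ}
    (h : ∀ y ∈ s, b ≤ dist x y) : b ≤ Metric.infDist x s := by
  rw [Metric.infDist_eq_iInf]
  have : Nonempty s := hs.to_subtype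
  exact le_ciInf fun y => h y y.2

theorem stmt_7 :
    IsClosed C₁ ∧ Convex ℝ C₁ ∧ (∀ p ∈ C₁, -p ∈ C₁) ∧
    IsClosed C₂ ∧ Convex ℝ C₂ ∧ (∀ p ∈ C₂, -p ∈ C₂) ∧
    C₁ ∩ C₂ = {p : Plane | p 0 = 0 ∧ p 1 ∈ Set.Icc (-2 : ℝ) 2} ∧
    Metric.infDist (pt (-4) 4) C₂ = 3 * Real.sqrt 2 ∧
    Metric.infDist (pt (-4) 4) C₁ = 4 ∧
    Metric.infDist (pt (-4) 4) C₂ > Metric.infDist (pt (-4) 4) C₁ ∧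
    (pt (-1) 1 ∈ C₂ ∧ ∀ y ∈ C₂, dist (pt (-4) 4) (pt (-1) 1) ≤ dist (pt (-4) 4) y) ∧
    (pt 0 1 ∈ C₁ ∧ ∀ y ∈ C₁, dist (pt (-1) 1) (pt 0 1) ≤ dist (pt (-1) 1) y) ∧
    pt 0 1 ∈ C₁ ∩ C₂ ∧
    (pt 0 2 ∈ C₁ ∩ C₂ ∧ ∀ y ∈ C₁ ∩ C₂, dist (pt (-4) 4) (pt 0 2) ≤ dist (pt (-4) 4) y) ∧
    pt 0 1 ≠ pt 0 2 := by
  have cont0 : Continuous fun p : Plane => p 0 := (EuclideanSpace.proj (0 : Fin 2)).continuous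
  have cont1 : Continuous fun p : Plane => p 1 := (EuclideanSpace.proj (1 : Fin 2)).continuous
  have hC1closed : IsClosed C₁ := isClosed_eq cont0 continuous_const
  have hC1conv : Convex ℝ C₁ := by
    intro p hp q hq a b ha hb hab
    simp only [C₁, Set.mem_setOf_eq] at *
    have : (a • p + b • q) 0 = a * p 0 + b * q 0 := rfl
    rw [this, hp, hq]; ring
  have hC2closed : IsClosed C₂ := by
    refine IsClosed.inter ?_ ?_
    · exact isClosed_le (by continuity) cont1
    · exact isClosed_le cont1 (by continuity)
  have hC2conv : Convex ℝ C₂ := by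
    rintro p ⟨hp1, hp2⟩ q ⟨hq1, hq2⟩ a b ha hb hab
    have h0 : (a • p + b • q) 0 = a * p 0 + b * q 0 := rfl
    have h1 : (a • p + b • q) 1 = a * p 1 + b * q 1 := rfl
    constructor <;> simp only [Set.mem_setOf_eq, h0, h1] <;> nlinarith
  -- C₂ lower bound for dist from (-4,4)
  have distC2 : ∀ y ∈ C₂, 3 * Real.sqrt 2 ≤ dist (pt (-4) 4) y := by
    rintro y ⟨hy1, _⟩
    rw [dist_pt_left]
    have h18 : (3 * Real.sqrt 2) = Real.sqrt 18 := by
      rw [show (18:ℝ) = 3^2 * 2 by norm_num, Real.sqrt_mul (by positivity), Real.sqrt_sq (by norm_num)]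
    rw [h18]
    apply Real.sqrt_le_sqrt
    nlinarith [sq_nonneg (y 0 - y 1 + 8), sq_nonneg (y 0 + y 1)]
  have dist14 : dist (pt (-4) 4) (pt (-1) 1) = 3 * Real.sqrt 2 := by
    rw [dist_pt]
    rw [show ((-4:ℝ) - -1) ^ 2 + ((4:ℝ) - 1) ^ 2 = 3^2 * 2 by norm_num,
      Real.sqrt_mul (by positivity), Real.sqrt_sq (by norm_num)]
  have h11C2 : pt (-1) 1 ∈ C₂ := by constructor <;> simp <;> norm_num
  have hinf2 : Metric.infDist (pt (-4) 4) C₂ = 3 * Real.sqrt 2 := by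
    refine le_antisymm ?_ (le_infDist' ⟨_, h11C2⟩ distC2)
    calc Metric.infDist (pt (-4) 4) C₂ ≤ dist (pt (-4) 4) (pt (-1) 1) :=
          Metric.infDist_le_dist_of_mem h11C2
      _ = 3 * Real.sqrt 2 := dist14
  have h01C1 : pt 0 1 ∈ C₁ := rfl
  have distC1 : ∀ y ∈ C₁, (4:ℝ) ≤ dist (pt (-4) 4) y := by
    intro y hy
    rw [dist_pt_left]
    have hy0 : y 0 = 0 := hy
    rw [hy0]
    have h16 : Real.sqrt 16 = 4 := by
      rw [show (16:ℝ) = 4^2 by norm_num]; exact Real.sqrt_sq (by norm_num)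
    calc (4:ℝ) = Real.sqrt 16 := h16.symm
      _ ≤ _ := Real.sqrt_le_sqrt (by nlinarith [sq_nonneg (4 - y 1)])
  have h04C1 : pt 0 4 ∈ C₁ := rfl
  have hinf1 : Metric.infDist (pt (-4) 4) C₁ = 4 := by
    refine le_antisymm ?_ (le_infDist' ⟨_, h04C1⟩ distC1)
    calc Metric.infDist (pt (-4) 4) C₁ ≤ dist (pt (-4) 4) (pt 0 4) :=
          Metric.infDist_le_dist_of_mem h04C1
      _ = 4 := by rw [dist_pt]; norm_num
  have sqrt2gt : (4:ℝ) < 3 * Real.sqrt 2 := by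
    nlinarith [Real.sq_sqrt (by norm_num : (2:ℝ) ≥ 0), Real.sqrt_nonneg 2]
  refine ⟨hC1closed, hC1conv, ?_, hC2closed, hC2conv, ?_, ?_, hinf2, hinf1,
    by rw [hinf1, hinf2]; exact sqrt2gt, ⟨h11C2, ?_⟩, ⟨h01C1, ?_⟩, ?_, ⟨?_, ?_⟩, ?_⟩
  · intro p hp
    have : (-p) 0 = -(p 0) := rfl
    simp only [C₁, Set.mem_setOf_eq] at *
    rw [this, hp, neg_zero]
  · rintro p ⟨h1, h2⟩
    have e0 : (-p) 0 = -(p 0) := rfl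
    have e1 : (-p) 1 = -(p 1) := rfl
    constructor <;> simp only [Set.mem_setOf_eq, e0, e1] <;> linarith
  · ext p
    simp only [C₁, C₂, Set.mem_inter_iff, Set.mem_setOf_eq, Set.mem_Icc]
    constructor
    · rintro ⟨h0, h1, h2⟩; rw [h0] at h1 h2; exact ⟨h0, by linarith, by linarith⟩
    · rintro ⟨h0, h1, h2⟩; rw [h0]; exact ⟨rfl, by linarith, by linarith⟩
  · intro y hy; rw [dist14]; exact distC2 y hy
  · intro y hy
    have hy0 : y 0 = 0 := hy
    rw [dist_pt, dist_pt_left, hy0]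
    apply Real.sqrt_le_sqrt
    nlinarith [sq_nonneg (1 - y 1)]
  · exact ⟨rfl, by constructor <;> simp <;> norm_num⟩
  · exact ⟨rfl, by constructor <;> simp <;> norm_num⟩
  · rintro y ⟨hy1, hy2⟩
    have hy0 : y 0 = 0 := hy1
    have hy2' := hy2.2
    rw [hy0] at hy2'
    rw [dist_pt, dist_pt_left, hy0]
    apply Real.sqrt_le_sqrt
    nlinarith [sq_nonneg (y 1 - 4)]
  · intro h
    have : (pt 0 1) 1 = (pt 0 2) 1 := by rw [h]
    simp at this

end
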